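/- Let α be a simple root, F_α = {x : α·x = 0, β·x > 0 ∀β ∈ S\{α}} the corresponding face of the Weyl chamber, and K_α = π⁻¹(F_α) = ∪_{w∈W} w(F_α). Then for every x ∈ V, α·π(x) = d(x, K_α), the Euclidean distance from x to K_α. -/

import Mathlib

open scoped RealInnerProductSpace
open Metric Set

variable {V : Type*} [NormedAddCommGroup V] [InnerProductSpace ℝ V] [FiniteDimensional ℝ V]

/-- Orthogonal reflection in the hyperplane orthogonal to the unit vector `α`. -/
noncomputable def sRefl (α x : V) : V := x - (2 * ⟪α, x⟫) • α

/-- The one-sided reflection `r_α`: identity on `{α·x ≥ 0}`, reflection on `{α·x ≤ 0}`,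
given by the concise formula `r_α(x) = x + 2(α·x)⁻ α`. -/
noncomputable def rRefl (α x : V) : V := x + (2 * max (-⟪α, x⟫) 0) • α

/-- `R` is a reduced root system of unit vectors. -/
def IsRootSystem (R : Finset V) : Prop :=
  (∀ α ∈ R, ‖α‖ = 1) ∧
  (∀ α ∈ R, ∀ t : ℝ, t • α ∈ R → t = 1 ∨ t = -1) ∧
  (∀ α ∈ R, ∀ β ∈ R, sRefl α β ∈ R)

/-- `Rpos` is a positive subsystem of `R`: the roots having positive inner product
against some vector `u` lying on no root hyperplane. -/
def IsPositiveSystem (R Rpos : Finset V) : Prop :=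
  ∃ u : V, (∀ β ∈ R, ⟪β, u⟫ ≠ 0) ∧ ∀ β, β ∈ Rpos ↔ β ∈ R ∧ 0 < ⟪β, u⟫

/-- `S` is the simple system associated with the positive subsystem `Rpos`. -/
def IsSimpleSystem (Rpos S : Finset V) : Prop :=
  S ⊆ Rpos ∧ LinearIndependent ℝ (fun x : (S : Set V) => (x : V)) ∧
  Submodule.span ℝ (S : Set V) = Submodule.span ℝ (Rpos : Set V) ∧
  ∀ β ∈ Rpos, ∃ c : V → ℝ, (∀ α ∈ S, 0 ≤ c α) ∧ β = ∑ α ∈ S, c α • α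

/-- The reflection group `W` generated by the reflections `s_α`, `α ∈ R`. -/
noncomputable def weylGroup (R : Finset V) : Subgroup (V ≃ₗᵢ[ℝ] V) :=
  Subgroup.closure {w : V ≃ₗᵢ[ℝ] V | ∃ α ∈ R, ∀ x, w x = sRefl α x}

/-- The facet associated with a sign pattern `(Ip, I0, Im)` on the positive roots. -/
def facet (Ip I0 Im : Finset V) : Set V :=
  {x | (∀ α ∈ Ip, 0 < ⟪α, x⟫) ∧ (∀ α ∈ I0, ⟪α, x⟫ = 0) ∧ (∀ α ∈ Im, ⟪α, x⟫ < 0)}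

/-- `(Ip, I0, Im)` is a partition of the positive system `Rpos`. -/
def IsFacetPartition (Rpos Ip I0 Im : Finset V) : Prop :=
  ((Ip : Set V) ∪ (I0 : Set V) ∪ (Im : Set V) = (Rpos : Set V)) ∧
  Disjoint (Ip : Set V) (I0 : Set V) ∧ Disjoint (Ip : Set V) (Im : Set V) ∧
  Disjoint (I0 : Set V) (Im : Set V)

/-- The closed positive Weyl chamber. -/
def closedChamber (S : Finset V) : Set V := {x | ∀ α ∈ S, 0 ≤ ⟪α, x⟫}

/-- The face `F_α` of the Weyl chamber, supported by the wall `H_α`. -/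
def faceF (S : Finset V) (α : V) : Set V :=
  {x | ⟪α, x⟫ = 0 ∧ ∀ β ∈ S, β ≠ α → 0 < ⟪β, x⟫}


set_option linter.unusedSectionVars false
set_option maxHeartbeats 1000000

lemma inner_sRefl_left (r a b : V) : ⟪sRefl r a, b⟫ = ⟪a, b⟫ - 2 * ⟪r, a⟫ * ⟪r, b⟫ := by
  simp only [sRefl, inner_sub_left, real_inner_smul_left]

lemma inner_sRefl_right (r a b : V) : ⟪a, sRefl r b⟫ = ⟪a, b⟫ - 2 * ⟪r, b⟫ * ⟪r, a⟫ := by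
  simp only [sRefl, inner_sub_right, real_inner_smul_right]
  rw [real_inner_comm a r]

lemma inner_sRefl_sRefl_left (r a b : V) : ⟪sRefl r a, b⟫ = ⟪a, sRefl r b⟫ := by
  rw [inner_sRefl_left, inner_sRefl_right]
  ring

lemma sRefl_sRefl {r : V} (h : ⟪r, r⟫ = 1) (x : V) : sRefl r (sRefl r x) = x := by
  simp only [sRefl, inner_sub_right, real_inner_smul_right, h]
  module

lemma sRefl_neg (r x : V) : sRefl (-r) x = sRefl r x := by
  simp only [sRefl, inner_neg_left]
  module

lemma sRefl_self {r : V} (h : ⟪r, r⟫ = 1) : sRefl r r = -r := by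
  simp only [sRefl, h]
  module

lemma sRefl_conj {b : V} (h : ⟪b, b⟫ = 1) (q x : V) :
    sRefl (sRefl b q) x = sRefl b (sRefl q (sRefl b x)) := by
  simp only [sRefl, inner_sub_left, inner_sub_right, real_inner_smul_left, real_inner_smul_right, h,
    smul_sub, sub_smul, smul_smul]
  rw [real_inner_comm q b]
  module

lemma sRefl_negv (r x : V) : sRefl r (-x) = -sRefl r x := by
  simp only [sRefl, inner_neg_right]; module

/-- The action of a word (list of roots) by successive reflections:
`applyWord [r₁, …, rₙ] x = s_{r₁} (s_{r₂} ⋯ (s_{rₙ} x))`. -/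
noncomputable def applyWord (l : List V) (x : V) : V := l.foldr sRefl x

@[simp] lemma applyWord_nil (x : V) : applyWord ([] : List V) x = x := rfl

@[simp] lemma applyWord_cons (r : V) (l : List V) (x : V) :
    applyWord (r :: l) x = sRefl r (applyWord l x) := rfl

lemma applyWord_append (l₁ l₂ : List V) (x : V) :
    applyWord (l₁ ++ l₂) x = applyWord l₁ (applyWord l₂ x) := by
  simp [applyWord, List.foldr_append]

lemma applyWord_singleton (r x : V) : applyWord [r] x = sRefl r x := rfl

lemma applyWord_reverse_right {l : List V} (h : ∀ r ∈ l, ⟪r, r⟫ = 1) (x : V) :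
    applyWord l (applyWord l.reverse x) = x := by
  induction l generalizing x with
  | nil => rfl
  | cons r m IH =>
    have hr : ⟪r, r⟫ = 1 := h r (List.mem_cons_self ..)
    have hm : ∀ s ∈ m, ⟪s, s⟫ = 1 := fun s hs => h s (List.mem_cons_of_mem _ hs)
    simp only [List.reverse_cons, applyWord_cons, applyWord_append, applyWord_singleton, applyWord_nil]
    rw [IH hm, sRefl_sRefl hr]

lemma applyWord_reverse_left {l : List V} (h : ∀ r ∈ l, ⟪r, r⟫ = 1) (x : V) :
    applyWord l.reverse (applyWord l x) = x := by
  have h' : ∀ r ∈ l.reverse, ⟪r, r⟫ = 1 := fun r hr => h r (List.mem_reverse.mp hr)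
  have := applyWord_reverse_right h' x
  rwa [List.reverse_reverse] at this

lemma inner_applyWord (l : List V) (a y : V) :
    ⟪a, applyWord l y⟫ = ⟪applyWord l.reverse a, y⟫ := by
  induction l generalizing a with
  | nil => rfl
  | cons r m IH =>
    simp only [applyWord_cons, List.reverse_cons, applyWord_append, applyWord_singleton, applyWord_nil]
    rw [← inner_sRefl_sRefl_left, IH]

lemma applyWord_negv (l : List V) (x : V) : applyWord l (-x) = -applyWord l x := by
  induction l with
  | nil => rfl
  | cons r m IH => simp [IH, sRefl_negv]

lemma applyWord_equivariant {l : List V} (h : ∀ r ∈ l, ⟪r, r⟫ = 1) (b x : V) :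
    applyWord l (sRefl b x) = sRefl (applyWord l b) (applyWord l x) := by
  induction l generalizing b x with
  | nil => rfl
  | cons r m IH =>
    have hr : ⟪r, r⟫ = 1 := h r (List.mem_cons_self ..)
    have hm : ∀ s ∈ m, ⟪s, s⟫ = 1 := fun s hs => h s (List.mem_cons_of_mem _ hs)
    simp only [applyWord_cons, IH hm]
    rw [sRefl_conj hr (applyWord m b) (sRefl r (applyWord m x)), sRefl_sRefl hr]

section MORE

variable {R Rpos S : Finset V} {u : V}

lemma root_inner_self (hR : IsRootSystem R) {r : V} (hr : r ∈ R) : ⟪r, r⟫ = 1 := by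
  rw [real_inner_self_eq_norm_mul_norm, hR.1 r hr]; norm_num

lemma neg_root_mem (hR : IsRootSystem R) {r : V} (hr : r ∈ R) : -r ∈ R := by
  have h := hR.2.2 r hr r hr
  rwa [sRefl_self (root_inner_self hR hr)] at h

lemma applyWord_root_mem (hR : IsRootSystem R) {l : List V} (hl : ∀ b ∈ l, b ∈ R)
    {p : V} (hp : p ∈ R) : applyWord l p ∈ R := by
  induction l with
  | nil => exact hp
  | cons r m IH =>
    exact hR.2.2 r (hl r (List.mem_cons_self ..)) _ (IH fun b hb => hl b (List.mem_cons_of_mem _ hb))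

lemma pos_subset (hu : ∀ β, β ∈ Rpos ↔ β ∈ R ∧ 0 < ⟪β, u⟫) : Rpos ⊆ R :=
  fun r hr => ((hu r).mp hr).1

lemma not_pos_and_neg (hu : ∀ β, β ∈ Rpos ↔ β ∈ R ∧ 0 < ⟪β, u⟫) {r : V}
    (h1 : r ∈ Rpos) (h2 : -r ∈ Rpos) : False := by
  have a1 := ((hu r).mp h1).2
  have a2 := ((hu (-r)).mp h2).2
  rw [inner_neg_left] at a2; linarith

lemma root_pos_or_neg (hu : ∀ β, β ∈ Rpos ↔ β ∈ R ∧ 0 < ⟪β, u⟫)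
    (hreg : ∀ β ∈ R, ⟪β, u⟫ ≠ 0) (hR : IsRootSystem R) {r : V} (hr : r ∈ R) :
    r ∈ Rpos ∨ -r ∈ Rpos := by
  rcases lt_or_gt_of_ne (hreg r hr) with h | h
  · right
    exact (hu (-r)).mpr ⟨neg_root_mem hR hr, by rw [inner_neg_left]; linarith⟩
  · left; exact (hu r).mpr ⟨hr, h⟩

lemma coeff_eq_zero (hS : IsSimpleSystem Rpos S) (f : V → ℝ)
    (hf : ∑ γ ∈ S, f γ • γ = 0) : ∀ γ ∈ S, f γ = 0 := by
  intro γ hγ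
  have h := linearIndependent_iff'.mp hS.2.1 Finset.univ (fun i => f i)
  have hsum : ∑ i : (S : Set V), f i • (i : V) = 0 := by
    rw [Finset.sum_finset_coe (fun γ => f γ • γ) S]; exact hf
  exact h hsum ⟨γ, hγ⟩ (Finset.mem_univ _)

/-- If `t` is a positive root, `β` simple, and `s_β t` is a negative root, then `t = β`. -/
lemma simple_perm (hR : IsRootSystem R) (hu : ∀ β, β ∈ Rpos ↔ β ∈ R ∧ 0 < ⟪β, u⟫)
    (hS : IsSimpleSystem Rpos S) {β t : V} (hβ : β ∈ S) (ht : t ∈ Rpos)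
    (hneg : -(sRefl β t) ∈ Rpos) : t = β := by
  classical
  obtain ⟨d, hd0, hdsum⟩ := hS.2.2.2 t ht
  obtain ⟨e, he0, hesum⟩ := hS.2.2.2 _ hneg
  have hkey : ∑ γ ∈ S, (fun γ => d γ + e γ - (if γ = β then 2 * ⟪β, t⟫ else 0)) γ • γ = 0 := by
    have h1 : ∑ γ ∈ S, (if γ = β then (2 * ⟪β, t⟫) • γ else (0:V)) = (2 * ⟪β, t⟫) • β :=
      (Finset.sum_ite_eq' S β (fun γ => (2 * ⟪β, t⟫) • γ)).trans (if_pos hβ)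
    have expand : ∀ γ ∈ S, (fun γ => d γ + e γ - (if γ = β then 2 * ⟪β, t⟫ else 0)) γ • γ
        = d γ • γ + e γ • γ - (if γ = β then (2 * ⟪β, t⟫) • γ else (0:V)) := by
      intro γ _
      by_cases hc : γ = β <;> simp only [hc, if_pos, if_neg, ite_true, ite_false] <;>
        simp [add_smul, sub_smul]
    rw [Finset.sum_congr rfl expand, Finset.sum_sub_distrib, Finset.sum_add_distrib, h1,
      ← hdsum, ← hesum]
    simp only [sRefl]
    module
  have hz := coeff_eq_zero hS _ hkey
  have hd_zero : ∀ γ ∈ S, γ ≠ β → d γ = 0 := by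
    intro γ hγ hne
    have := hz γ hγ
    simp only [if_neg hne] at this
    have := he0 γ hγ
    have := hd0 γ hγ
    linarith
  have ht_eq : t = d β • β := by
    rw [hdsum]
    exact Finset.sum_eq_single_of_mem β hβ fun γ hγ hne => by rw [hd_zero γ hγ hne, zero_smul]
  have hβR : β ∈ R := pos_subset hu (hS.1 hβ)
  have htR : t ∈ R := pos_subset hu ht
  rcases hR.2.1 β hβR (d β) (by rw [← ht_eq]; exact htR) with h1 | h1
  · rw [ht_eq, h1, one_smul]
  · exfalso
    have : -t = β := by rw [ht_eq, h1]; simp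
    exact not_pos_and_neg hu ht (by rw [this]; exact hS.1 hβ)

end MORE

section MORE2

variable {R Rpos S : Finset V} {u : V}

/-- The exchange lemma: if `p` is a positive root sent to a negative root by the inverse of
the word `l` (over simple roots), then `s_p ∘ (apply l)` is given by a word shorter by one. -/
lemma exchange_lemma (hR : IsRootSystem R) (hreg : ∀ β ∈ R, ⟪β, u⟫ ≠ 0)
    (hu : ∀ β, β ∈ Rpos ↔ β ∈ R ∧ 0 < ⟪β, u⟫) (hS : IsSimpleSystem Rpos S) :
    ∀ (l : List V), (∀ r ∈ l, r ∈ S) → ∀ p ∈ Rpos, -(applyWord l.reverse p) ∈ Rpos →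
    ∃ l' : List V, (∀ r ∈ l', r ∈ S) ∧ l'.length + 1 = l.length ∧
      ∀ x, sRefl p (applyWord l x) = applyWord l' x := by
  intro l
  induction l with
  | nil =>
    intro _ p hp hneg
    exact absurd (not_pos_and_neg hu hp (by simpa using hneg)) (by simp)
  | cons β m IH =>
    intro hlS p hp hneg
    have hβS : β ∈ m.cons β := List.mem_cons_self ..
    have hβ : β ∈ S := hlS β hβS
    have hmS : ∀ r ∈ m, r ∈ S := fun r hr => hlS r (List.mem_cons_of_mem _ hr)
    have hβR : β ∈ R := pos_subset hu (hS.1 hβ)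
    have hpR : p ∈ R := pos_subset hu hp
    have hβ1 : ⟪β, β⟫ = 1 := root_inner_self hR hβR
    have hqR : sRefl β p ∈ R := hR.2.2 β hβR p hpR
    have hrev : applyWord (β :: m).reverse p = applyWord m.reverse (sRefl β p) := by
      simp [List.reverse_cons, applyWord_append, applyWord_singleton]
    rcases root_pos_or_neg hu hreg hR hqR with hq | hq
    · -- s_β p positive: use IH
      obtain ⟨m', hm'S, hm'len, hm'eq⟩ := IH hmS (sRefl β p) hq (by rw [← hrev]; exact hneg)
      refine ⟨β :: m', fun r hr => ?_, by simp [← hm'len], ?_⟩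
      · rcases List.mem_cons.mp hr with h | h
        · rw [h]; exact hβ
        · exact hm'S r h
      · intro x
        have hp_eq : p = sRefl β (sRefl β p) := (sRefl_sRefl hβ1 p).symm
        calc sRefl p (applyWord (β :: m) x)
            = sRefl (sRefl β (sRefl β p)) (sRefl β (applyWord m x)) := by
              rw [← hp_eq]; rfl
          _ = sRefl β (sRefl (sRefl β p) (sRefl β (sRefl β (applyWord m x)))) := by
              rw [sRefl_conj hβ1]
          _ = sRefl β (sRefl (sRefl β p) (applyWord m x)) := by rw [sRefl_sRefl hβ1]
          _ = sRefl β (applyWord m' x) := by rw [hm'eq x]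
          _ = applyWord (β :: m') x := rfl
    · -- s_β p negative: then p = β
      have hpβ : p = β := simple_perm hR hu hS hβ hp hq
      refine ⟨m, hmS, by simp, fun x => ?_⟩
      rw [hpβ]
      show sRefl β (sRefl β (applyWord m x)) = applyWord m x
      rw [sRefl_sRefl hβ1]

end MORE2

section MORE3

variable {R Rpos S : Finset V} {u : V}

/-- A word over the simple roots whose action preserves the positive system acts as the
identity. -/
lemma word_id (hR : IsRootSystem R) (hreg : ∀ β ∈ R, ⟪β, u⟫ ≠ 0)
    (hu : ∀ β, β ∈ Rpos ↔ β ∈ R ∧ 0 < ⟪β, u⟫) (hS : IsSimpleSystem Rpos S) :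
    ∀ (n : ℕ) (l : List V), l.length = n → (∀ r ∈ l, r ∈ S) →
      (∀ p ∈ Rpos, applyWord l p ∈ Rpos) → ∀ x, applyWord l x = x := by
  intro n
  induction n using Nat.strong_induction_on with
  | _ n IH =>
    intro l hlen hlS hpres x
    rcases List.eq_nil_or_concat l with rfl | ⟨m, b, rfl⟩
    · rfl
    · have hbS : b ∈ S := hlS b (by simp [List.concat_eq_append])
      have hmS : ∀ r ∈ m, r ∈ S := fun r hr => hlS r (by simp [List.concat_eq_append, hr])
      have hmR1 : ∀ r ∈ m, ⟪r, r⟫ = 1 :=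
        fun r hr => root_inner_self hR (pos_subset hu (hS.1 (hmS r hr)))
      have hbR : b ∈ R := pos_subset hu (hS.1 hbS)
      have hb1 : ⟪b, b⟫ = 1 := root_inner_self hR hbR
      have hconcat : ∀ y, applyWord (m.concat b) y = applyWord m (sRefl b y) := by
        intro y; rw [List.concat_eq_append, applyWord_append, applyWord_singleton]
      have hp : applyWord (m.concat b) b ∈ Rpos := hpres b (hS.1 hbS)
      set p := applyWord (m.concat b) b with hpdef
      have hp_eq : p = -(applyWord m b) := by
        rw [hpdef, hconcat, sRefl_self hb1, applyWord_negv]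
      have hrevneg : -(applyWord m.reverse p) ∈ Rpos := by
        have : applyWord m.reverse p = -b := by
          rw [hp_eq, applyWord_negv, applyWord_reverse_left hmR1]
        rw [this, neg_neg]; exact hS.1 hbS
      obtain ⟨m', hm'S, hm'len, hm'eq⟩ := exchange_lemma hR hreg hu hS m hmS p hp hrevneg
      have hsame : ∀ y, applyWord (m.concat b) y = applyWord m' y := by
        intro y
        rw [hconcat, ← hm'eq y, hp_eq, sRefl_neg]
        rw [applyWord_equivariant hmR1]
      have hm'pres : ∀ q ∈ Rpos, applyWord m' q ∈ Rpos := by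
        intro q hq; rw [← hsame]; exact hpres q hq
      have hlt : m'.length < n := by
        rw [← hlen]; simp [List.concat_eq_append, ← hm'len]
      rw [hsame x]
      exact IH m'.length hlt m' rfl hm'S hm'pres x

/-- For `y` in the closed chamber, `y - w y` is a nonnegative combination of simple roots. -/
lemma cone_lemma (hR : IsRootSystem R) (hreg : ∀ β ∈ R, ⟪β, u⟫ ≠ 0)
    (hu : ∀ β, β ∈ Rpos ↔ β ∈ R ∧ 0 < ⟪β, u⟫) (hS : IsSimpleSystem Rpos S) :
    ∀ (n : ℕ) (l : List V), l.length = n → (∀ r ∈ l, r ∈ S) →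
      ∀ y ∈ closedChamber S, ∃ c : V → ℝ, (∀ γ ∈ S, 0 ≤ c γ) ∧
        y - applyWord l y = ∑ γ ∈ S, c γ • γ := by
  intro n
  induction n using Nat.strong_induction_on with
  | _ n IH =>
    intro l hlen hlS y hy
    have hlR1 : ∀ r ∈ l, ⟪r, r⟫ = 1 :=
      fun r hr => root_inner_self hR (pos_subset hu (hS.1 (hlS r hr)))
    have hlR : ∀ r ∈ l, r ∈ R := fun r hr => pos_subset hu (hS.1 (hlS r hr))
    have hrevS : ∀ r ∈ l.reverse, r ∈ S := fun r hr => hlS r (List.mem_reverse.mp hr)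
    have hrevR : ∀ r ∈ l.reverse, r ∈ R := fun r hr => hlR r (List.mem_reverse.mp hr)
    by_cases hcase : ∀ p ∈ Rpos, applyWord l.reverse p ∈ Rpos
    · have hid := word_id hR hreg hu hS l.reverse.length l.reverse rfl hrevS hcase
      have : applyWord l y = y := by
        have h1 : applyWord l.reverse (applyWord l y) = y := applyWord_reverse_left hlR1 y
        rw [hid (applyWord l y)] at h1; exact h1
      exact ⟨fun _ => 0, fun γ _ => le_refl _, by simp [this]⟩
    · push_neg at hcase
      obtain ⟨p, hp, hpneg⟩ := hcase
      have hqR : applyWord l.reverse p ∈ R := applyWord_root_mem hR hrevR (pos_subset hu hp)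
      have hq : -(applyWord l.reverse p) ∈ Rpos := by
        rcases root_pos_or_neg hu hreg hR hqR with h | h
        · exact absurd h hpneg
        · exact h
      obtain ⟨l', hl'S, hl'len, hl'eq⟩ := exchange_lemma hR hreg hu hS l hlS p hp hq
      obtain ⟨c', hc'0, hc'eq⟩ := IH l'.length (by omega) l' rfl hl'S y hy
      obtain ⟨d, hd0, hdsum⟩ := hS.2.2.2 p hp
      set t : ℝ := -(2 * ⟪p, applyWord l y⟫) with htdef
      have ht0 : 0 ≤ t := by
        have h1 : ⟪p, applyWord l y⟫ = ⟪applyWord l.reverse p, y⟫ := inner_applyWord l p y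
        have h2 : 0 ≤ ⟪-(applyWord l.reverse p), y⟫ := by
          obtain ⟨e, he0, hesum⟩ := hS.2.2.2 _ hq
          rw [hesum, sum_inner]
          refine Finset.sum_nonneg fun γ hγ => ?_
          rw [real_inner_smul_left]
          exact mul_nonneg (he0 γ hγ) (hy γ hγ)
        rw [inner_neg_left] at h2
        rw [htdef, h1]; linarith
      refine ⟨fun γ => c' γ + t * d γ, fun γ hγ => add_nonneg (hc'0 γ hγ)
        (mul_nonneg ht0 (hd0 γ hγ)), ?_⟩
      have hw' : applyWord l' y = applyWord l y + t • p := by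
        rw [← hl'eq y]
        simp only [sRefl, htdef]; module
      have : y - applyWord l y = (y - applyWord l' y) + t • p := by
        rw [hw']; abel
      rw [this, hc'eq, hdsum]
      rw [Finset.smul_sum]
      rw [← Finset.sum_add_distrib]
      refine Finset.sum_congr rfl fun γ hγ => ?_
      rw [smul_smul, add_smul]

end MORE3

section MORE4

variable {R Rpos S : Finset V} {u : V}

lemma reflection_word_pos (hR : IsRootSystem R) (hreg : ∀ β ∈ R, ⟪β, u⟫ ≠ 0)
    (hu : ∀ β, β ∈ Rpos ↔ β ∈ R ∧ 0 < ⟪β, u⟫) (hS : IsSimpleSystem Rpos S) :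
    ∀ (n : ℕ) (r : V), r ∈ Rpos → (Rpos.filter fun r' => ⟪r', u⟫ < ⟪r, u⟫).card = n →
      ∃ l : List V, (∀ b ∈ l, b ∈ S) ∧ ∀ x, sRefl r x = applyWord l x := by
  classical
  intro n
  induction n using Nat.strong_induction_on with
  | _ n IH =>
    intro r hr hn
    by_cases hrS : r ∈ S
    · exact ⟨[r], by simp [hrS], fun x => rfl⟩
    · obtain ⟨d, hd0, hdsum⟩ := hS.2.2.2 r hr
      have hrR := pos_subset hu hr
      have h1 : ∑ γ ∈ S, d γ * ⟪γ, r⟫ = 1 := by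
        have h2 : ⟪(∑ γ ∈ S, d γ • γ : V), r⟫ = 1 := by
          rw [← hdsum]; exact root_inner_self hR hrR
        rw [sum_inner] at h2
        simpa [real_inner_smul_left] using h2
      have hex : ∃ β ∈ S, 0 < d β * ⟪β, r⟫ := by
        by_contra hcon
        push_neg at hcon
        have : ∑ γ ∈ S, d γ * ⟪γ, r⟫ ≤ 0 := Finset.sum_nonpos hcon
        linarith
      obtain ⟨β, hβ, hβpos⟩ := hex
      have hβr : 0 < ⟪β, r⟫ := by nlinarith [hd0 β hβ]
      have hβR : β ∈ R := pos_subset hu (hS.1 hβ)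
      have hβ1 : ⟪β, β⟫ = 1 := root_inner_self hR hβR
      have hr'R : sRefl β r ∈ R := hR.2.2 β hβR r hrR
      have hrpos' : sRefl β r ∈ Rpos := by
        rcases root_pos_or_neg hu hreg hR hr'R with h | h
        · exact h
        · exact absurd (simple_perm hR hu hS hβ hr h)
            (fun he => hrS (he ▸ hβ))
      have hβu : 0 < ⟪β, u⟫ := ((hu β).mp (hS.1 hβ)).2
      have hdec : ⟪sRefl β r, u⟫ < ⟪r, u⟫ := by
        rw [inner_sRefl_left]
        nlinarith
      have hsub : (Rpos.filter fun r' => ⟪r', u⟫ < ⟪sRefl β r, u⟫)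
          ⊆ Rpos.filter fun r' => ⟪r', u⟫ < ⟪r, u⟫ := by
        intro z hz
        simp only [Finset.mem_filter] at *
        exact ⟨hz.1, lt_trans hz.2 hdec⟩
      have hcard : (Rpos.filter fun r' => ⟪r', u⟫ < ⟪sRefl β r, u⟫).card < n := by
        rw [← hn]
        refine Finset.card_lt_card (((Finset.ssubset_iff_of_subset hsub)).mpr
          ⟨sRefl β r, Finset.mem_filter.mpr ⟨hrpos', hdec⟩, fun hmem => ?_⟩)
        exact absurd (Finset.mem_filter.mp hmem).2 (lt_irrefl _)
      obtain ⟨l', hl'S, hl'eq⟩ := IH _ hcard (sRefl β r) hrpos' rfl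
      refine ⟨β :: (l' ++ [β]), ?_, fun x => ?_⟩
      · intro b hb
        rcases List.mem_cons.mp hb with h | h
        · exact h ▸ hβ
        · rcases List.mem_append.mp h with h' | h'
          · exact hl'S b h'
          · rw [List.mem_singleton.mp h']; exact hβ
      · calc sRefl r x = sRefl (sRefl β (sRefl β r)) x := by rw [sRefl_sRefl hβ1]
          _ = sRefl β (sRefl (sRefl β r) (sRefl β x)) := sRefl_conj hβ1 _ _
          _ = sRefl β (applyWord l' (sRefl β x)) := by rw [hl'eq]
          _ = applyWord (β :: (l' ++ [β])) x := by
              rw [applyWord_cons, applyWord_append, applyWord_singleton]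

lemma reflection_word (hR : IsRootSystem R) (hreg : ∀ β ∈ R, ⟪β, u⟫ ≠ 0)
    (hu : ∀ β, β ∈ Rpos ↔ β ∈ R ∧ 0 < ⟪β, u⟫) (hS : IsSimpleSystem Rpos S)
    {r : V} (hr : r ∈ R) :
    ∃ l : List V, (∀ b ∈ l, b ∈ S) ∧ ∀ x, sRefl r x = applyWord l x := by
  rcases root_pos_or_neg hu hreg hR hr with h | h
  · exact reflection_word_pos hR hreg hu hS _ r h rfl
  · obtain ⟨l, hlS, hle⟩ := reflection_word_pos hR hreg hu hS _ (-r) h rfl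
    exact ⟨l, hlS, fun x => by rw [← sRefl_neg r x]; exact hle x⟩

lemma exists_word (hR : IsRootSystem R) (hreg : ∀ β ∈ R, ⟪β, u⟫ ≠ 0)
    (hu : ∀ β, β ∈ Rpos ↔ β ∈ R ∧ 0 < ⟪β, u⟫) (hS : IsSimpleSystem Rpos S)
    {w : V ≃ₗᵢ[ℝ] V} (hw : w ∈ weylGroup R) :
    ∃ l : List V, (∀ b ∈ l, b ∈ S) ∧ ∀ x, w x = applyWord l x := by
  induction hw using Subgroup.closure_induction with
  | mem w hw =>
    obtain ⟨r, hrR, hwr⟩ := hw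
    obtain ⟨l, hlS, hle⟩ := reflection_word hR hreg hu hS hrR
    exact ⟨l, hlS, fun x => (hwr x).trans (hle x)⟩
  | one => exact ⟨[], by simp, fun x => rfl⟩
  | mul a b ha hb iha ihb =>
    obtain ⟨l1, h1S, h1e⟩ := iha
    obtain ⟨l2, h2S, h2e⟩ := ihb
    refine ⟨l1 ++ l2, fun r hr => ?_, fun x => ?_⟩
    · rcases List.mem_append.mp hr with h | h
      · exact h1S r h
      · exact h2S r h
    · rw [applyWord_append, ← h1e, ← h2e]
      rfl
  | inv a ha iha =>
    obtain ⟨l, hlS, hle⟩ := iha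
    have hunit : ∀ r ∈ l, ⟪r, r⟫ = 1 :=
      fun r hr => root_inner_self hR (pos_subset hu (hS.1 (hlS r hr)))
    refine ⟨l.reverse, fun r hr => hlS r (List.mem_reverse.mp hr), fun x => ?_⟩
    have h1 : a (applyWord l.reverse x) = x := by
      rw [hle, applyWord_reverse_right hunit]
    calc a⁻¹ x = a⁻¹ (a (applyWord l.reverse x)) := by rw [h1]
      _ = applyWord l.reverse x := by
          rw [show a⁻¹ (a (applyWord l.reverse x)) = (a⁻¹ * a) (applyWord l.reverse x) from rfl,
            inv_mul_cancel]
          rfl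

lemma chamber_inner_le (hR : IsRootSystem R) (hreg : ∀ β ∈ R, ⟪β, u⟫ ≠ 0)
    (hu : ∀ β, β ∈ Rpos ↔ β ∈ R ∧ 0 < ⟪β, u⟫) (hS : IsSimpleSystem Rpos S)
    {w : V ≃ₗᵢ[ℝ] V} (hw : w ∈ weylGroup R) {y c : V}
    (hy : y ∈ closedChamber S) (hc : c ∈ closedChamber S) : ⟪c, w y⟫ ≤ ⟪c, y⟫ := by
  obtain ⟨l, hlS, hle⟩ := exists_word hR hreg hu hS hw
  obtain ⟨co, hco0, hcoeq⟩ := cone_lemma hR hreg hu hS l.length l rfl hlS y hy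
  have hnn : 0 ≤ ⟪c, y - applyWord l y⟫ := by
    rw [hcoeq, inner_sum]
    refine Finset.sum_nonneg fun γ hγ => ?_
    rw [real_inner_smul_right]
    exact mul_nonneg (hco0 γ hγ) (real_inner_comm γ c ▸ hc γ hγ)
  rw [inner_sub_right] at hnn
  rw [hle y]
  linarith

end MORE4

section MORE5

variable {R Rpos S : Finset V} {u : V}

lemma exists_dual_vector_simple (hS : IsSimpleSystem Rpos S) {α : V} (hα : α ∈ S) :
    ∃ v : V, ⟪α, v⟫ = 0 ∧ ∀ β ∈ S, β ≠ α → ⟪β, v⟫ = 1 := by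
  classical
  set U := Submodule.span ℝ ((S : Set V)) with hU
  let T : U →ₗ[ℝ] (↥(S : Set V) → ℝ) :=
    { toFun := fun v i => ⟪(i : V), (v : V)⟫
      map_add' := by intro a b; funext i; simp [inner_add_right]
      map_smul' := by intro c a; funext i; simp [real_inner_smul_right] }
  have hinj : Function.Injective T := by
    rw [← LinearMap.ker_eq_bot, LinearMap.ker_eq_bot']
    intro v hv
    have hv'' : ∀ i ∈ S, ⟪i, (v : V)⟫ = 0 := by
      intro i hi
      exact congrFun hv ⟨i, Finset.mem_coe.mpr hi⟩
    obtain ⟨f, -, hf⟩ := Submodule.mem_span_finset.mp v.2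
    have hzero : ⟪(v : V), (v : V)⟫ = 0 := by
      calc ⟪(v : V), (v : V)⟫ = ⟪∑ i ∈ S, f i • i, (v : V)⟫ := by rw [hf]
        _ = ∑ i ∈ S, f i * ⟪i, (v : V)⟫ := by
            rw [sum_inner]; exact Finset.sum_congr rfl fun i _ => real_inner_smul_left ..
        _ = 0 := Finset.sum_eq_zero fun i hi => by rw [hv'' i hi, mul_zero]
    have : (v : V) = 0 := by rwa [inner_self_eq_zero] at hzero
    exact Subtype.ext this
  have hfr : Module.finrank ℝ U = S.card := finrank_span_finset_eq_card hS.2.1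
  have hfr2 : Module.finrank ℝ (↥(S : Set V) → ℝ) = S.card := by
    rw [Module.finrank_pi]
    simp
  have hsurj : Function.Surjective T :=
    (LinearMap.injective_iff_surjective_of_finrank_eq_finrank (by rw [hfr, hfr2])).mp hinj
  obtain ⟨v', hv'⟩ := hsurj (fun i => if (i : V) = α then 0 else 1)
  refine ⟨(v' : V), ?_, fun β hβ hne => ?_⟩
  · have := congrFun hv' ⟨α, Finset.mem_coe.mpr hα⟩
    simpa [T] using this
  · have := congrFun hv' ⟨β, Finset.mem_coe.mpr hβ⟩
    simpa [T, hne] using this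

end MORE5

section MORE6

variable {R Rpos S : Finset V} {u : V}

lemma simple_inner_nonpos (hR : IsRootSystem R) (hreg : ∀ β ∈ R, ⟪β, u⟫ ≠ 0)
    (hu : ∀ β, β ∈ Rpos ↔ β ∈ R ∧ 0 < ⟪β, u⟫) (hS : IsSimpleSystem Rpos S)
    {β γ : V} (hβ : β ∈ S) (hγ : γ ∈ S) (hne : β ≠ γ) : ⟪β, γ⟫ ≤ 0 := by
  classical
  by_contra hpos
  push_neg at hpos
  have hβR : β ∈ R := pos_subset hu (hS.1 hβ)
  have hγR : γ ∈ R := pos_subset hu (hS.1 hγ)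
  have hgR : sRefl β γ ∈ R := hR.2.2 β hβR γ hγR
  rcases root_pos_or_neg hu hreg hR hgR with h | h
  · obtain ⟨e, he0, hesum⟩ := hS.2.2.2 _ h
    have hkey : ∑ δ ∈ S, (fun δ => e δ + (if δ = β then 2 * ⟪β, γ⟫ else 0)
        - (if δ = γ then 1 else 0)) δ • δ = 0 := by
      have h1 : ∑ δ ∈ S, (if δ = β then (2 * ⟪β, γ⟫) • δ else (0:V)) = (2 * ⟪β, γ⟫) • β :=
        (Finset.sum_ite_eq' S β _).trans (if_pos hβ)
      have h2 : ∑ δ ∈ S, (if δ = γ then (1:ℝ) • δ else (0:V)) = (1:ℝ) • γ :=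
        (Finset.sum_ite_eq' S γ _).trans (if_pos hγ)
      have expand : ∀ δ ∈ S, (fun δ => e δ + (if δ = β then 2 * ⟪β, γ⟫ else 0)
          - (if δ = γ then 1 else 0)) δ • δ
          = e δ • δ + (if δ = β then (2 * ⟪β, γ⟫) • δ else (0:V))
            - (if δ = γ then (1:ℝ) • δ else (0:V)) := by
        intro δ _
        by_cases hc1 : δ = β <;> by_cases hc2 : δ = γ <;>
          simp [hc1, hc2, add_smul, sub_smul]
      rw [Finset.sum_congr rfl expand, Finset.sum_sub_distrib, Finset.sum_add_distrib, h1, h2,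
        ← hesum]
      simp only [sRefl, one_smul]
      module
    have := coeff_eq_zero hS _ hkey β hβ
    simp only [eq_self_iff_true, if_true, if_neg hne] at this
    have := he0 β hβ
    nlinarith
  · exact hne (simple_perm hR hu hS hβ (hS.1 hγ) h).symm

end MORE6

/-- for a simple root `α`, `α·π(x)` equals the distance from `x` to
`K_α = ∪_{w ∈ W} w(F_α)`. -/
theorem inner_projection_eq_dist (R Rpos S : Finset V) (hR : IsRootSystem R)
    (hpos : IsPositiveSystem R Rpos) (hS : IsSimpleSystem Rpos S)
    (α : V) (hα : α ∈ S) (pi : V → V)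
    (hpi : ∀ x : V, pi x ∈ closedChamber S ∧ ∃ w ∈ weylGroup R, w x = pi x) :
    ∀ x : V, ⟪α, pi x⟫ =
      Metric.infDist x (⋃ w ∈ weylGroup R, (w : V → V) '' faceF S α) := by
  obtain ⟨u, hreg, hu⟩ := hpos
  intro x
  obtain ⟨hcx, w, hwW, hwx⟩ := hpi x
  set c := pi x with hcdef
  have hαRp : α ∈ Rpos := hS.1 hα
  have hαR : α ∈ R := pos_subset hu hαRp
  have hα1 : ⟪α, α⟫ = 1 := root_inner_self hR hαR
  have hαn : ‖α‖ = 1 := hR.1 α hαR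
  have hαc : 0 ≤ ⟪α, c⟫ := hcx α hα
  obtain ⟨v₀, hv0α, hv0β⟩ := exists_dual_vector_simple hS hα
  set K := ⋃ w ∈ weylGroup R, (w : V → V) '' faceF S α with hK
  -- the perturbed projections of c onto the wall lie in the face
  have hface : ∀ t : ℝ, 0 < t → c - ⟪α, c⟫ • α + t • v₀ ∈ faceF S α := by
    intro t ht
    constructor
    · rw [inner_add_right, inner_sub_right, real_inner_smul_right, real_inner_smul_right, hα1,
        hv0α]
      ring
    · intro β hβ hne
      have hβc : 0 ≤ ⟪β, c⟫ := hcx β hβ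
      have hβα : ⟪β, α⟫ ≤ 0 := simple_inner_nonpos hR hreg hu hS hβ hα hne
      rw [inner_add_right, inner_sub_right, real_inner_smul_right, real_inner_smul_right,
        hv0β β hβ hne]
      nlinarith
  have hmem : ∀ t : ℝ, 0 < t →
      (w⁻¹ : V ≃ₗᵢ[ℝ] V) (c - ⟪α, c⟫ • α + t • v₀) ∈ K := by
    intro t ht
    rw [hK]
    exact Set.mem_biUnion (Subgroup.inv_mem _ hwW) (Set.mem_image_of_mem _ (hface t ht))
  have hKne : K.Nonempty := ⟨_, hmem 1 one_pos⟩
  -- upper bound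
  have hub : infDist x K ≤ ⟪α, c⟫ := by
    have key : ∀ t : ℝ, 0 < t → infDist x K ≤ ⟪α, c⟫ + t * ‖v₀‖ := by
      intro t ht
      set yt := c - ⟪α, c⟫ • α + t • v₀ with hyt
      refine le_trans (infDist_le_dist_of_mem (hmem t ht)) ?_
      have h1 : w ((w⁻¹ : V ≃ₗᵢ[ℝ] V) yt) = yt := by
        rw [show w ((w⁻¹ : V ≃ₗᵢ[ℝ] V) yt) = (w * w⁻¹) yt from rfl, mul_inv_cancel]
        rfl
      have h2 : dist x ((w⁻¹ : V ≃ₗᵢ[ℝ] V) yt) = ‖c - yt‖ := by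
        rw [dist_eq_norm]
        calc ‖x - (w⁻¹ : V ≃ₗᵢ[ℝ] V) yt‖
            = ‖w (x - (w⁻¹ : V ≃ₗᵢ[ℝ] V) yt)‖ := (w.norm_map _).symm
          _ = ‖w x - w ((w⁻¹ : V ≃ₗᵢ[ℝ] V) yt)‖ := by rw [map_sub]
          _ = ‖c - yt‖ := by rw [hwx, h1]
      have h3 : c - yt = ⟪α, c⟫ • α - t • v₀ := by rw [hyt]; module
      rw [h2, h3]
      calc ‖⟪α, c⟫ • α - t • v₀‖ ≤ ‖⟪α, c⟫ • α‖ + ‖t • v₀‖ := norm_sub_le _ _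
        _ = ⟪α, c⟫ + t * ‖v₀‖ := by
            rw [norm_smul, norm_smul, hαn, mul_one, Real.norm_eq_abs, Real.norm_eq_abs,
              abs_of_nonneg hαc, abs_of_pos ht]
    by_contra hcon
    push_neg at hcon
    have hv0 : (0:ℝ) ≤ ‖v₀‖ := norm_nonneg _
    have ht : 0 < (infDist x K - ⟪α, c⟫) / (2 * (‖v₀‖ + 1)) :=
      div_pos (by linarith) (by positivity)
    have := key _ ht
    have hlt : (infDist x K - ⟪α, c⟫) / (2 * (‖v₀‖ + 1)) * ‖v₀‖ < infDist x K - ⟪α, c⟫ := by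
      rw [div_mul_eq_mul_div, div_lt_iff₀ (by positivity)]
      nlinarith
    linarith
  -- lower bound
  have hlb : ⟪α, c⟫ ≤ infDist x K := by
    by_contra hcon
    push_neg at hcon
    obtain ⟨z, hz, hzlt⟩ := (infDist_lt_iff hKne).mp hcon
    rw [hK] at hz
    obtain ⟨g, hgW, hz'⟩ := Set.mem_iUnion₂.mp hz
    obtain ⟨y, hyF, rfl⟩ := hz'
    have hyC : y ∈ closedChamber S := by
      intro β hβ
      by_cases hbe : β = α
      · rw [hbe, hyF.1]
      · exact le_of_lt (hyF.2 β hβ hbe)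
    have hL : ⟪c, (w * g) y⟫ ≤ ⟪c, y⟫ :=
      chamber_inner_le hR hreg hu hS (mul_mem hwW hgW) hyC hcx
    have hn1 : ‖(w * g) y‖ = ‖y‖ := (w * g).norm_map y
    have hdist : dist x (g y) = ‖c - (w * g) y‖ := by
      rw [dist_eq_norm]
      calc ‖x - g y‖ = ‖w (x - g y)‖ := (w.norm_map _).symm
        _ = ‖w x - w (g y)‖ := by rw [map_sub]
        _ = ‖c - (w * g) y‖ := by rw [hwx]; rfl
    have hsq : ‖c - y‖ ^ 2 ≤ ‖c - (w * g) y‖ ^ 2 := by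
      rw [norm_sub_sq_real, norm_sub_sq_real, hn1]
      linarith
    have h5 : ‖c - y‖ ≤ ‖c - (w * g) y‖ := by
      have a1 := norm_nonneg (c - y)
      have a2 := norm_nonneg (c - (w * g) y)
      nlinarith
    have h6 : ⟪α, c⟫ ≤ ‖c - y‖ := by
      have h7 : ⟪α, c - y⟫ = ⟪α, c⟫ := by rw [inner_sub_right, hyF.1]; ring
      calc ⟪α, c⟫ = ⟪α, c - y⟫ := h7.symm
        _ ≤ ‖α‖ * ‖c - y‖ := real_inner_le_norm _ _
        _ = ‖c - y‖ := by rw [hαn, one_mul]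
    rw [hdist] at hzlt
    linarith
  exact le_antisymm hlb hub
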